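/- Under Assumptions A with ε_m < ε_M, define p_n(≤m) := Σ_{j=A_n}^{m} p_n(j), and suppose that for every ε ∈ (ε_m, ε_M) the limit log 𝒫(≤ε) := lim_{n→∞} (1/n)·log p_n(≤⌊εn⌋) exists and that ε ↦ log 𝒫(≤ε) is continuous on (ε_m, ε_M). Let (δ_n) be a sequence of natural numbers with A_n < δ_n < B_n for all n ≥ N₀ (some N₀) and δ_n/n → δ with ε_m < δ < ε_M. Then limsup_{n→∞} (1/n)·log p_n(δ_n) ≤ log 𝒫(≤δ). -/

import Mathlib

open Filter Set

/-- Under Assumptions A with `ε_m < ε_M`, with `p_n(≤m) = Σ_{j=A_n}^m p n j`: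
if for every `ε ∈ (ε_m, ε_M)` the limit `log 𝒫(≤ε) = lim (1/n) log p_n(≤⌊εn⌋)`
exists and is continuous in `ε`, and `(δ_n)` satisfies `A_n < δ_n < B_n`
eventually with `δ_n/n → δ ∈ (ε_m, ε_M)`, then
`limsup (1/n) log p n δ_n ≤ log 𝒫(≤δ)`. -/
theorem limsup_le_integrated_le
    (p : ℕ → ℕ → ℕ) (A B : ℕ → ℕ) (K C : ℝ)
    (hK : 0 < K) (hpK : ∀ n, 1 ≤ n → ∀ m, (p n m : ℝ) ≤ K ^ n)
    (hC : 0 < C)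
    (hABle : ∀ n, 1 ≤ n → A n ≤ B n)
    (hBC : ∀ n, 1 ≤ n → (B n : ℝ) ≤ C * n)
    (hpos : ∀ n, 1 ≤ n → ∀ m, A n ≤ m → m ≤ B n → 0 < p n m)
    (hzero : ∀ n, 1 ≤ n → ∀ m, (m < A n ∨ B n < m) → p n m = 0)
    (hsuper : ∀ n₁ n₂, 1 ≤ n₁ → 1 ≤ n₂ → ∀ m₁ m₂,
      p n₁ m₁ * p n₂ m₂ ≤ p (n₁ + n₂) (m₁ + m₂))
    (εm εM : ℝ)
    (hεm : Tendsto (fun n : ℕ => (A n : ℝ) / n) atTop (nhds εm))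
    (hεM : Tendsto (fun n : ℕ => (B n : ℝ) / n) atTop (nhds εM))
    (hlt : εm < εM)
    (logPle : ℝ → ℝ)
    (hPle : ∀ ε ∈ Set.Ioo εm εM,
      Tendsto (fun n : ℕ =>
          Real.log (∑ j ∈ Finset.Icc (A n) ⌊ε * n⌋₊, p n j) / n)
        atTop (nhds (logPle ε)))
    (hcont : ContinuousOn logPle (Set.Ioo εm εM))
    (δseq : ℕ → ℕ) (N₀ : ℕ)
    (hδseq : ∀ n, N₀ ≤ n → A n < δseq n ∧ δseq n < B n)
    (δ : ℝ) (hδ : δ ∈ Set.Ioo εm εM)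
    (htend : Tendsto (fun n : ℕ => (δseq n : ℝ) / n) atTop (nhds δ)) :
    Filter.limsup (fun n : ℕ => Real.log (p n (δseq n)) / n) atTop ≤ logPle δ := by
  set f : ℕ → ℝ := fun n : ℕ => Real.log (p n (δseq n)) / n with hf
  -- Step 1: for any ε ∈ (δ, εM), limsup f ≤ logPle ε
  have key : ∀ ε ∈ Set.Ioo δ εM, Filter.limsup f atTop ≤ logPle ε := by
    intro ε hε
    have hεIoo : ε ∈ Set.Ioo εm εM := ⟨lt_trans hδ.1 hε.1, hε.2⟩
    set g : ℕ → ℝ := fun n : ℕ =>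
      Real.log (∑ j ∈ Finset.Icc (A n) ⌊ε * n⌋₊, p n j) / n with hg
    have hgt : Tendsto g atTop (nhds (logPle ε)) := hPle ε hεIoo
    -- eventual pointwise bound f ≤ g
    have hev : ∀ᶠ n in atTop, f n ≤ g n := by
      have h1 : ∀ᶠ n : ℕ in atTop, (δseq n : ℝ) / n < ε :=
        htend.eventually_lt_const hε.1
      filter_upwards [h1, eventually_ge_atTop N₀, eventually_ge_atTop 1]
        with n hlt' hN hn1
      have hnpos : (0 : ℝ) < n := by exact_mod_cast hn1
      have hδn : (δseq n : ℝ) ≤ ε * n := by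
        have := (div_lt_iff₀ hnpos).mp hlt'
        linarith
      have hmem : δseq n ∈ Finset.Icc (A n) ⌊ε * n⌋₊ := by
        refine Finset.mem_Icc.mpr ⟨(hδseq n hN).1.le, Nat.le_floor hδn⟩
      have hple : p n (δseq n) ≤ ∑ j ∈ Finset.Icc (A n) ⌊ε * n⌋₊, p n j :=
        Finset.single_le_sum (fun i _ => Nat.zero_le _) hmem
      have hppos : 0 < p n (δseq n) :=
        hpos n hn1 _ (hδseq n hN).1.le (hδseq n hN).2.le
      have hlog : Real.log (p n (δseq n))
          ≤ Real.log (∑ j ∈ Finset.Icc (A n) ⌊ε * n⌋₊, p n j) := by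
        apply Real.log_le_log (by exact_mod_cast hppos)
        exact_mod_cast hple
      exact div_le_div_of_nonneg_right hlog hnpos.le
    have hgb : IsBoundedUnder (· ≤ ·) atTop g := hgt.isBoundedUnder_le
    have hcob : IsCoboundedUnder (· ≤ ·) atTop f := by
      apply isCoboundedUnder_le_of_eventually_le atTop (x := 0)
      filter_upwards [eventually_ge_atTop N₀, eventually_ge_atTop 1] with n hN hn1
      have hppos : 0 < p n (δseq n) :=
        hpos n hn1 _ (hδseq n hN).1.le (hδseq n hN).2.le
      have h1 : (1 : ℝ) ≤ p n (δseq n) := by exact_mod_cast hppos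
      have : 0 ≤ Real.log (p n (δseq n)) := Real.log_nonneg h1
      positivity
    calc Filter.limsup f atTop ≤ Filter.limsup g atTop :=
          Filter.limsup_le_limsup hev hcob hgb
      _ = logPle ε := hgt.limsup_eq
  -- Step 2: pass to the limit ε → δ⁺ using continuity
  have hne : (nhdsWithin δ (Set.Ioo δ εM)).NeBot := left_nhdsWithin_Ioo_neBot hδ.2
  have hsub : Set.Ioo δ εM ⊆ Set.Ioo εm εM := fun x hx => ⟨lt_trans hδ.1 hx.1, hx.2⟩
  have hct : Tendsto logPle (nhdsWithin δ (Set.Ioo δ εM)) (nhds (logPle δ)) := by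
    have h1 : ContinuousWithinAt logPle (Set.Ioo εm εM) δ := hcont δ hδ
    have h2 : ContinuousWithinAt logPle (Set.Ioo δ εM) δ := h1.mono hsub
    exact h2
  refine ge_of_tendsto hct ?_
  filter_upwards [self_mem_nhdsWithin] with ε hε using key ε hε
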